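/- Let P be a probability measure on 𝒳 × {0,1} × ℝ with marginal P_X on 𝒳 and treatment-conditional covariate laws P_{X1}, P_{X0}. Let Q be a probability measure on 𝒳 absolutely continuous w.r.t. both P_{X1} and P_{X0}, with likelihood ratios w₁ = dQ/dP_{X1} and w₀ = dQ/dP_{X0}. Suppose μ̃₁, μ̃₀ : 𝒳 → ℝ are bounded measurable with, for every c in a class 𝒞 of bounded measurable functions, |E[(Y − μ̃₁(X)) c(X) w₁(X) | T=1]| ≤ α and |E[(Y − μ̃₀(X)) c(X) w₀(X) | T=0]| ≤ α. Under unconfoundedness and consistency, for all c ∈ 𝒞: |E_Q[(τ̃(X) − τ(X)) c(X)]| ≤ 2α, where τ̃ = μ̃₁ − μ̃₀ and τ(x) = E[Y(1) − Y(0) | X = x]. -/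

import Mathlib

open MeasureTheory

/-- Bounded measurable functions are integrable against a finite measure. -/
lemma aux_intbdd {α : Type*} [MeasurableSpace α] (μ : Measure α) [IsFiniteMeasure μ]
    {f : α → ℝ} (hf : Measurable f) {C : ℝ} (hb : ∀ x, |f x| ≤ C) :
    Integrable f μ := by
  refine ⟨hf.aestronglyMeasurable, ?_⟩
  refine HasFiniteIntegral.of_bounded (C := C) (ae_of_all _ fun x => ?_)
  simpa [Real.norm_eq_abs] using hb x

/-- A bounded measurable multiple of an integrable function is integrable. -/
lemma aux_mul_int {Ω : Type*} [MeasurableSpace Ω] {P : Measure Ω} {g h : Ω → ℝ}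
    (hg : Integrable g P) (hm : Measurable fun ω => h ω * g ω)
    {C : ℝ} (hb : ∀ ω, |h ω| ≤ C) :
    Integrable (fun ω => h ω * g ω) P := by
  refine (hg.abs.const_mul C).mono' hm.aestronglyMeasurable (ae_of_all _ fun ω => ?_)
  rw [Real.norm_eq_abs, abs_mul]
  exact mul_le_mul_of_nonneg_right (hb ω) (abs_nonneg _)

/-- One-arm bias bound. -/
lemma aux_arm {Ω 𝒳 : Type*} [MeasurableSpace Ω] [MeasurableSpace 𝒳]
    (P : Measure Ω) [IsProbabilityMeasure P]
    (Q : Measure 𝒳) [IsProbabilityMeasure Q]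
    (X : Ω → 𝒳) (S Y : Ω → ℝ) (w μa μta c : 𝒳 → ℝ) (α p : ℝ)
    (hX : Measurable X) (hS : Measurable S) (hY : Measurable Y)
    (hwm : Measurable w) (hμam : Measurable μa) (hμtam : Measurable μta)
    (hcm : Measurable c)
    (B : ℝ) (hμab : ∀ x, |μa x| ≤ B) (hYb : ∀ ω, |Y ω| ≤ B)
    (Ct : ℝ) (hμtab : ∀ x, |μta x| ≤ Ct)
    (Cc : ℝ) (hcb : ∀ x, |c x| ≤ Cc)
    (hBnn : 0 ≤ B) (hCtnn : 0 ≤ Ct) (hcnn : 0 ≤ Cc)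
    (hp : p ≠ 0)
    (hw : ∀ f : 𝒳 → ℝ, Measurable f → (∃ C, ∀ x, |f x| ≤ C) →
      ∫ x, f x ∂Q = (∫ ω, f (X ω) * w (X ω) * S ω ∂P) / p)
    (hCE : ∀ f : 𝒳 → ℝ, Measurable f →
      Integrable (fun ω => f (X ω) * Y ω * S ω) P →
      Integrable (fun ω => f (X ω) * μa (X ω) * S ω) P →
      ∫ ω, f (X ω) * Y ω * S ω ∂P = ∫ ω, f (X ω) * μa (X ω) * S ω ∂P)
    (hMA : |(∫ ω, (Y ω - μta (X ω)) * c (X ω) * w (X ω) * S ω ∂P) / p| ≤ α) :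
    |∫ x, (μta x - μa x) * c x ∂Q| ≤ α := by
  -- integrability of g := w(X)·S
  have h1 := hw (fun _ => 1) measurable_const ⟨1, by simp⟩
  simp only [one_mul, integral_const, measure_univ, ENNReal.toReal_one, probReal_univ, smul_eq_mul,
    mul_one] at h1
  have hgint : ∫ ω, w (X ω) * S ω ∂P = p := by
    field_simp at h1
    linarith
  have hg : Integrable (fun ω => w (X ω) * S ω) P := by
    by_contra hng
    rw [integral_undef hng] at hgint
    exact hp hgint.symm
  have hgm : Measurable fun ω => w (X ω) * S ω := (hwm.comp hX).mul hS
  -- integrability of the three building blocks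
  have hIY : Integrable (fun ω => (c (X ω) * Y ω) * (w (X ω) * S ω)) P := by
    refine aux_mul_int hg (((hcm.comp hX).mul hY).mul hgm) (C := Cc * B) fun ω => ?_
    rw [abs_mul]
    exact mul_le_mul (hcb _) (hYb _) (abs_nonneg _) hcnn
  have hIμa : Integrable (fun ω => (c (X ω) * μa (X ω)) * (w (X ω) * S ω)) P := by
    refine aux_mul_int hg (((hcm.comp hX).mul (hμam.comp hX)).mul hgm) (C := Cc * B)
      fun ω => ?_
    rw [abs_mul]
    exact mul_le_mul (hcb _) (hμab _) (abs_nonneg _) hcnn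
  have hIμt : Integrable (fun ω => (c (X ω) * μta (X ω)) * (w (X ω) * S ω)) P := by
    refine aux_mul_int hg (((hcm.comp hX).mul (hμtam.comp hX)).mul hgm) (C := Cc * Ct)
      fun ω => ?_
    rw [abs_mul]
    exact mul_le_mul (hcb _) (hμtab _) (abs_nonneg _) hcnn
  -- conditional-expectation step with f = c·w
  have hCEapp : ∫ ω, (c (X ω) * Y ω) * (w (X ω) * S ω) ∂P
      = ∫ ω, (c (X ω) * μa (X ω)) * (w (X ω) * S ω) ∂P := by
    have h := hCE (fun x => c x * w x) (hcm.mul hwm) ?_ ?_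
    · have e1 : (fun ω => (c (X ω) * w (X ω)) * Y ω * S ω)
          = fun ω => (c (X ω) * Y ω) * (w (X ω) * S ω) := funext fun ω => by ring
      have e2 : (fun ω => (c (X ω) * w (X ω)) * μa (X ω) * S ω)
          = fun ω => (c (X ω) * μa (X ω)) * (w (X ω) * S ω) := funext fun ω => by ring
      rw [e1, e2] at h
      exact h
    · have e : (fun ω => (c (X ω) * w (X ω)) * Y ω * S ω)
          = fun ω => (c (X ω) * Y ω) * (w (X ω) * S ω) := funext fun ω => by ring
      rw [e]; exact hIY
    · have e : (fun ω => (c (X ω) * w (X ω)) * μa (X ω) * S ω)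
          = fun ω => (c (X ω) * μa (X ω)) * (w (X ω) * S ω) := funext fun ω => by ring
      rw [e]; exact hIμa
  -- the multiaccuracy integral
  have hAeq : ∫ ω, (Y ω - μta (X ω)) * c (X ω) * w (X ω) * S ω ∂P
      = (∫ ω, (c (X ω) * Y ω) * (w (X ω) * S ω) ∂P)
        - ∫ ω, (c (X ω) * μta (X ω)) * (w (X ω) * S ω) ∂P := by
    rw [← integral_sub hIY hIμt]
    congr 1
    funext ω
    ring
  -- change of measure for (μta - μa)·c
  have hkey : ∫ x, (μta x - μa x) * c x ∂Q
      = (∫ ω, (μta (X ω) - μa (X ω)) * c (X ω) * w (X ω) * S ω ∂P) / p :=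
    hw (fun x => (μta x - μa x) * c x) ((hμtam.sub hμam).mul hcm)
      ⟨(Ct + B) * Cc, fun x => by
        rw [abs_mul]
        exact mul_le_mul ((abs_sub _ _).trans (add_le_add (hμtab x) (hμab x))) (hcb x)
          (abs_nonneg _) (add_nonneg hCtnn hBnn)⟩
  have hNeq : ∫ ω, (μta (X ω) - μa (X ω)) * c (X ω) * w (X ω) * S ω ∂P
      = (∫ ω, (c (X ω) * μta (X ω)) * (w (X ω) * S ω) ∂P)
        - ∫ ω, (c (X ω) * μa (X ω)) * (w (X ω) * S ω) ∂P := by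
    rw [← integral_sub hIμt hIμa]
    congr 1
    funext ω
    ring
  rw [hkey, hNeq, ← hCEapp]
  calc |((∫ ω, (c (X ω) * μta (X ω)) * (w (X ω) * S ω) ∂P)
        - ∫ ω, (c (X ω) * Y ω) * (w (X ω) * S ω) ∂P) / p|
      = |(∫ ω, (Y ω - μta (X ω)) * c (X ω) * w (X ω) * S ω ∂P) / p| := by
        rw [hAeq, abs_div, abs_div, abs_sub_comm]
    _ ≤ α := hMA

/-- Robust CATE bias control under unknown covariate shift
(Proposition 2 of the paper). Let `P` be the law of `(X,T,Y)` with treatment-conditional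
covariate laws `P_{X1}, P_{X0}`, and let `Q` be a target covariate distribution with
likelihood ratios `w₁ = dQ/dP_{X1}`, `w₀ = dQ/dP_{X0}` (encoded by the change-of-measure
identities `∫ f dQ = E[f(X) w_t(X) | T=t]`, where `E[· | T=t]` is expectation conditional
on the event `{T=t}`, of probability `p₁` resp. `1 − p₁`). If the post-processed outcome
models `μ̃₁, μ̃₀` satisfy, for every `c` in a class `𝒞` of bounded measurable test functions,
`|E[(Y − μ̃₁(X)) c(X) w₁(X) | T=1]| ≤ α` and `|E[(Y − μ̃₀(X)) c(X) w₀(X) | T=0]| ≤ α`,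
then under unconfoundedness and consistency, for all `c ∈ 𝒞`:
`|E_Q[(τ̃(X) − τ(X)) c(X)]| ≤ 2α`, where `τ̃ = μ̃₁ − μ̃₀` and `τ(x) = E[Y(1) − Y(0) | X=x]`
(the pointwise difference of versions `μ₁, μ₀` of `E[Y(t) | X=x]`).
`T : Ω → ℝ` takes values in `{0,1}`. -/
theorem multiaccuracy_cate_external_shift
    {Ω 𝒳 : Type*} [MeasurableSpace Ω] [MeasurableSpace 𝒳]
    (P : Measure Ω) [IsProbabilityMeasure P]
    (Q : Measure 𝒳) [IsProbabilityMeasure Q]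
    (X : Ω → 𝒳) (T Y Y1 Y0 : Ω → ℝ)
    (w1 w0 μ1 μ0 μt1 μt0 τ : 𝒳 → ℝ) (𝒞 : Set (𝒳 → ℝ)) (α p1 : ℝ)
    (hX : Measurable X) (hT : Measurable T) (hY : Measurable Y)
    (hY1 : Measurable Y1) (hY0 : Measurable Y0)
    (hw1m : Measurable w1) (hw0m : Measurable w0)
    (hμ1m : Measurable μ1) (hμ0m : Measurable μ0)
    (hμt1m : Measurable μt1) (hμt0m : Measurable μt0)
    (hTbin : ∀ ω, T ω = 0 ∨ T ω = 1)
    (B : ℝ) (hY1b : ∀ ω, |Y1 ω| ≤ B) (hY0b : ∀ ω, |Y0 ω| ≤ B)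
    (hμ1b : ∀ x, |μ1 x| ≤ B) (hμ0b : ∀ x, |μ0 x| ≤ B)
    (hμt1b : ∃ C, ∀ x, |μt1 x| ≤ C) (hμt0b : ∃ C, ∀ x, |μt0 x| ≤ C)
    -- consistency: `Y = Y(T)`
    (hcons : ∀ ω, Y ω = T ω * Y1 ω + (1 - T ω) * Y0 ω)
    -- probabilities of treatment arms
    (hp1 : p1 = ∫ ω, T ω ∂P) (hp1pos : 0 < p1) (hp1lt : p1 < 1)
    -- members of the test class are bounded and measurable
    (h𝒞 : ∀ c ∈ 𝒞, Measurable c ∧ ∃ C, ∀ x, |c x| ≤ C)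
    -- `w₁ = dQ/dP_{X1}` : change of measure from the treated-arm covariate law to `Q`
    (hw1 : ∀ f : 𝒳 → ℝ, Measurable f → (∃ C, ∀ x, |f x| ≤ C) →
      ∫ x, f x ∂Q = (∫ ω, f (X ω) * w1 (X ω) * T ω ∂P) / p1)
    -- `w₀ = dQ/dP_{X0}` : change of measure from the control-arm covariate law to `Q`
    (hw0 : ∀ f : 𝒳 → ℝ, Measurable f → (∃ C, ∀ x, |f x| ≤ C) →
      ∫ x, f x ∂Q = (∫ ω, f (X ω) * w0 (X ω) * (1 - T ω) ∂P) / (1 - p1))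
    -- `μ_t(x) = E[Y | X=x, T=t]` a.s. (against measurable test functions `f` with
    -- the requisite integrability)
    (hμ1CE : ∀ f : 𝒳 → ℝ, Measurable f →
      Integrable (fun ω => f (X ω) * Y ω * T ω) P →
      Integrable (fun ω => f (X ω) * μ1 (X ω) * T ω) P →
      ∫ ω, f (X ω) * Y ω * T ω ∂P = ∫ ω, f (X ω) * μ1 (X ω) * T ω ∂P)
    (hμ0CE : ∀ f : 𝒳 → ℝ, Measurable f →
      Integrable (fun ω => f (X ω) * Y ω * (1 - T ω)) P →
      Integrable (fun ω => f (X ω) * μ0 (X ω) * (1 - T ω)) P →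
      ∫ ω, f (X ω) * Y ω * (1 - T ω) ∂P = ∫ ω, f (X ω) * μ0 (X ω) * (1 - T ω) ∂P)
    -- unconfoundedness: `μ_t(x) = E[Y(t) | X=x]` a.s.
    (hUnconf1 : ∀ f : 𝒳 → ℝ, Measurable f → (∃ C, ∀ x, |f x| ≤ C) →
      ∫ ω, f (X ω) * Y1 ω ∂P = ∫ ω, f (X ω) * μ1 (X ω) ∂P)
    (hUnconf0 : ∀ f : 𝒳 → ℝ, Measurable f → (∃ C, ∀ x, |f x| ≤ C) →
      ∫ ω, f (X ω) * Y0 ω ∂P = ∫ ω, f (X ω) * μ0 (X ω) ∂P)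
    -- `τ(x) = E[Y(1) − Y(0) | X = x]`
    (hτ : ∀ x, τ x = μ1 x - μ0 x)
    -- integrability of the multi-accuracy integrands
    (hInt1 : ∀ c ∈ 𝒞, Integrable (fun ω => (Y ω - μt1 (X ω)) * c (X ω) * w1 (X ω) * T ω) P
      ∧ Integrable (fun ω => (Y ω - μ1 (X ω)) * c (X ω) * w1 (X ω) * T ω) P)
    (hInt0 : ∀ c ∈ 𝒞,
      Integrable (fun ω => (Y ω - μt0 (X ω)) * c (X ω) * w0 (X ω) * (1 - T ω)) P
      ∧ Integrable (fun ω => (Y ω - μ0 (X ω)) * c (X ω) * w0 (X ω) * (1 - T ω)) P)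
    -- multi-accuracy over the product class `𝒞 × {w₁}` resp. `𝒞 × {w₀}`
    (hMA1 : ∀ c ∈ 𝒞,
      |(∫ ω, (Y ω - μt1 (X ω)) * c (X ω) * w1 (X ω) * T ω ∂P) / p1| ≤ α)
    (hMA0 : ∀ c ∈ 𝒞,
      |(∫ ω, (Y ω - μt0 (X ω)) * c (X ω) * w0 (X ω) * (1 - T ω) ∂P) / (1 - p1)| ≤ α) :
    ∀ c ∈ 𝒞, |∫ x, ((μt1 x - μt0 x) - τ x) * c x ∂Q| ≤ 2 * α := by
  intro c hc
  obtain ⟨hcm, Cc, hcb⟩ := h𝒞 c hc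
  obtain ⟨C1, hμt1b'⟩ := hμt1b
  obtain ⟨C0, hμt0b'⟩ := hμt0b
  have hYb : ∀ ω, |Y ω| ≤ |B| := by
    intro ω
    rcases hTbin ω with h | h <;> rw [hcons ω, h] <;> simp <;>
      [exact (hY0b ω).trans (le_abs_self _); exact (hY1b ω).trans (le_abs_self _)]
  have h1 : |∫ x, (μt1 x - μ1 x) * c x ∂Q| ≤ α :=
    aux_arm P Q X T Y w1 μ1 μt1 c α p1 hX hT hY hw1m hμ1m hμt1m hcm
      |B| (fun x => (hμ1b x).trans (le_abs_self _)) hYb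
      |C1| (fun x => (hμt1b' x).trans (le_abs_self _))
      |Cc| (fun x => (hcb x).trans (le_abs_self _))
      (abs_nonneg _) (abs_nonneg _) (abs_nonneg _) (ne_of_gt hp1pos)
      hw1 hμ1CE (hMA1 c hc)
  have h0 : |∫ x, (μt0 x - μ0 x) * c x ∂Q| ≤ α :=
    aux_arm P Q X (fun ω => 1 - T ω) Y w0 μ0 μt0 c α (1 - p1) hX
      (measurable_const.sub hT) hY hw0m hμ0m hμt0m hcm
      |B| (fun x => (hμ0b x).trans (le_abs_self _)) hYb
      |C0| (fun x => (hμt0b' x).trans (le_abs_self _))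
      |Cc| (fun x => (hcb x).trans (le_abs_self _))
      (abs_nonneg _) (abs_nonneg _) (abs_nonneg _)
      (sub_ne_zero_of_ne (Ne.symm (ne_of_lt hp1lt)))
      hw0 hμ0CE (hMA0 c hc)
  have hI1 : Integrable (fun x => (μt1 x - μ1 x) * c x) Q := by
    refine aux_intbdd Q ((hμt1m.sub hμ1m).mul hcm) (C := (|C1| + |B|) * |Cc|) fun x => ?_
    rw [abs_mul]
    exact mul_le_mul ((abs_sub _ _).trans (add_le_add ((hμt1b' x).trans (le_abs_self _))
      ((hμ1b x).trans (le_abs_self _)))) ((hcb x).trans (le_abs_self _)) (abs_nonneg _)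
      (by positivity)
  have hI0 : Integrable (fun x => (μt0 x - μ0 x) * c x) Q := by
    refine aux_intbdd Q ((hμt0m.sub hμ0m).mul hcm) (C := (|C0| + |B|) * |Cc|) fun x => ?_
    rw [abs_mul]
    exact mul_le_mul ((abs_sub _ _).trans (add_le_add ((hμt0b' x).trans (le_abs_self _))
      ((hμ0b x).trans (le_abs_self _)))) ((hcb x).trans (le_abs_self _)) (abs_nonneg _)
      (by positivity)
  have esp : (fun x => ((μt1 x - μt0 x) - τ x) * c x)
      = fun x => (μt1 x - μ1 x) * c x - (μt0 x - μ0 x) * c x := by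
    funext x
    rw [hτ x]
    ring
  rw [esp, integral_sub hI1 hI0]
  have := abs_sub (∫ x, (μt1 x - μ1 x) * c x ∂Q) (∫ x, (μt0 x - μ0 x) * c x ∂Q)
  linarith
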